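/- Let ν be an admissible profile with dual profile ν', and let α'_max := inf{α' : ν'(α') = 1}. Then ν' is non-decreasing, and moreover for all α' ≤ α'_max and ε ≥ 0 one has ν'(α' - ε) ≤ ν'(α') - ε. -/

import Mathlib

noncomputable section
open Filter Set Topology

/-- Clamp an extended real into `{-∞} ∪ [0,1]`. -/
def clamp (b : EReal) : EReal := if b < 0 then ⊥ else min b 1

/-- The dual profile `ν'(α') = ⌊⌊ α' + inf{α : ν(α) - α > α'} ⌋⌋` (with `inf ∅ = +∞`). -/
def dualProfile (ν : ℝ → EReal) (a' : ℝ) : EReal :=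
  clamp ((a' : EReal) +
    sInf ((fun a : ℝ => (a : EReal)) '' {a : ℝ | (a' : EReal) < ν a - (a : EReal)}))

lemma clamp_le_self (b : EReal) : clamp b ≤ b := by
  unfold clamp; split
  · exact bot_le
  · exact min_le_left _ _

lemma clamp_mono : Monotone clamp := by
  intro x y hxy
  unfold clamp
  split
  · exact bot_le
  · next hx =>
    rw [if_neg (fun hy => hx (lt_of_le_of_lt hxy hy))]
    exact min_le_min hxy le_rfl

lemma clamp_eq_one (b : EReal) (h : 1 ≤ b) : clamp b = 1 := by
  unfold clamp
  rw [if_neg (not_lt.2 (le_trans zero_le_one h)), min_eq_right h]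

lemma add_sub_shift (r s : ℝ) (z : EReal) :
    ((r : EReal) + z) - (s : EReal) = ((r - s : ℝ) : EReal) + z := by
  induction z using EReal.rec with
  | bot => rw [EReal.add_bot, EReal.bot_sub, EReal.add_bot]
  | coe t => norm_cast; ring
  | top => rw [EReal.coe_add_top, EReal.top_sub_coe, EReal.coe_add_top]

lemma infSet_mono (ν : ℝ → EReal) : Monotone (fun a' : ℝ =>
    sInf ((fun a : ℝ => (a : EReal)) '' {a : ℝ | (a' : EReal) < ν a - (a : EReal)})) := by
  intro a b hab
  exact sInf_le_sInf (Set.image_mono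
    (fun x hx => lt_of_le_of_lt (EReal.coe_le_coe_iff.2 hab) hx))

theorem stmt8 (ν : ℝ → EReal)
    (hmono : Monotone ν)
    (hrc : ∀ a : ℝ, ContinuousWithinAt ν (Set.Ici a) a)
    (hval : ∀ a : ℝ, ν a = ⊥ ∨ (0 ≤ ν a ∧ ν a ≤ 1))
    (hne : ∃ a : ℝ, ν a ≠ ⊥) :
    Monotone (dualProfile ν) ∧
    ∀ α' ε : ℝ, 0 ≤ ε →
      (α' : EReal) ≤ sInf ((fun a : ℝ => (a : EReal)) '' {a : ℝ | dualProfile ν a = 1}) →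
      dualProfile ν (α' - ε) ≤ dualProfile ν α' - (ε : EReal) := by
  set I : ℝ → EReal := fun a' =>
    sInf ((fun a : ℝ => (a : EReal)) '' {a : ℝ | (a' : EReal) < ν a - (a : EReal)}) with hI
  have Imono : Monotone I := infSet_mono ν
  have dmono : Monotone (dualProfile ν) := by
    intro a b hab
    exact clamp_mono (add_le_add (EReal.coe_le_coe_iff.2 hab) (Imono hab))
  refine ⟨dmono, ?_⟩
  intro α' ε hε hle
  have hxy : ((α' - ε : ℝ) : EReal) + I (α' - ε) ≤ ((α' : EReal) + I α') - (ε : EReal) := by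
    rw [add_sub_shift]
    exact add_le_add le_rfl (Imono (by linarith))
  show clamp (((α' - ε : ℝ) : EReal) + I (α' - ε)) ≤ clamp ((α' : EReal) + I α') - (ε : EReal)
  rcases eq_or_lt_of_le hε with hε0 | hε0
  · -- ε = 0
    subst hε0
    simp only [EReal.coe_zero, sub_zero]
    exact clamp_mono (by simpa using hxy)
  by_cases hy1 : 1 < (α' : EReal) + I α'
  · -- clamp y = 1
    rw [clamp_eq_one _ hy1.le]
    have key : ∀ δ : ℝ, 0 < δ → ((α' - δ : ℝ) : EReal) + I (α' - ε) < 1 := by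
      intro δ hδ
      set δ₀ := min δ ε with hδ₀
      have hδ₀pos : 0 < δ₀ := lt_min hδ hε0
      have hδ₀ε : δ₀ ≤ ε := min_le_right _ _
      have hne1 : dualProfile ν (α' - δ₀) ≠ 1 := by
        intro h
        have h1 : sInf ((fun a : ℝ => (a : EReal)) '' {a : ℝ | dualProfile ν a = 1})
            ≤ ((α' - δ₀ : ℝ) : EReal) := sInf_le ⟨α' - δ₀, h, rfl⟩
        have := EReal.coe_le_coe_iff.1 (le_trans hle h1)
        linarith
      have hf : ((α' - δ₀ : ℝ) : EReal) + I (α' - δ₀) < 1 := by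
        by_contra h
        push_neg at h
        exact hne1 (clamp_eq_one _ h)
      have h2 : ((α' - δ₀ : ℝ) : EReal) + I (α' - ε) ≤ ((α' - δ₀ : ℝ) : EReal) + I (α' - δ₀) :=
        add_le_add le_rfl (Imono (by linarith))
      have h3 : ((α' - δ : ℝ) : EReal) + I (α' - ε) ≤ ((α' - δ₀ : ℝ) : EReal) + I (α' - ε) :=
        add_le_add (EReal.coe_le_coe_iff.2 (by simp [hδ₀]; linarith [min_le_left δ ε])) le_rfl
      exact lt_of_le_of_lt (h3.trans h2) hf
    have hx1 : ∀ z : EReal, (∀ δ : ℝ, 0 < δ → ((α' - δ : ℝ) : EReal) + z < 1) →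
        ((α' - ε : ℝ) : EReal) + z ≤ ((1 - ε : ℝ) : EReal) := by
      intro z hz
      induction z using EReal.rec with
      | bot => simp
      | top =>
        exfalso
        have := hz 1 one_pos
        rw [EReal.coe_add_top] at this
        exact (not_top_lt this)
      | coe r =>
        have hr : r ≤ 1 - α' := by
          apply le_of_forall_pos_le_add
          intro δ hδ
          have := hz δ hδ
          rw [← EReal.coe_add, show (1 : EReal) = ((1 : ℝ) : EReal) from rfl,
            EReal.coe_lt_coe_iff] at this
          linarith
        rw [← EReal.coe_add, EReal.coe_le_coe_iff]
        linarith
    calc clamp (((α' - ε : ℝ) : EReal) + I (α' - ε))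
        ≤ ((α' - ε : ℝ) : EReal) + I (α' - ε) := clamp_le_self _
      _ ≤ ((1 - ε : ℝ) : EReal) := hx1 _ key
      _ = (1 : EReal) - (ε : EReal) := by rw [← EReal.coe_one, ← EReal.coe_sub]
  · by_cases hy0 : (α' : EReal) + I α' < 0
    · -- clamp x = ⊥
      have hx0 : ((α' - ε : ℝ) : EReal) + I (α' - ε) < 0 := by
        refine lt_of_le_of_lt (hxy.trans ?_) hy0
        calc ((α' : EReal) + I α') - (ε : EReal)
            = ((α' : EReal) + I α') + (-(ε : EReal)) := rfl
          _ ≤ ((α' : EReal) + I α') + 0 := add_le_add le_rfl (by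
              rw [← EReal.coe_neg, ← EReal.coe_zero, EReal.coe_le_coe_iff]; linarith)
          _ = (α' : EReal) + I α' := add_zero _
      rw [clamp, if_pos hx0]
      exact bot_le
    · -- 0 ≤ y ≤ 1
      push_neg at hy0 hy1
      rw [show clamp ((α' : EReal) + I α') = (α' : EReal) + I α' by
        rw [clamp, if_neg (not_lt.2 hy0), min_eq_left hy1]]
      exact (clamp_le_self _).trans hxy
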